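/- Let N ≥ 1 and let M be a real N×N matrix that is diagonalizable over ℂ. Suppose M has a real eigenvalue λ with λ > 1 that is algebraically simple and strictly dominant (every complex eigenvalue μ of M with μ ≠ λ satisfies |μ| < λ), and suppose there is a real eigenvector w of M for λ all of whose components have the same strict sign (w_l · w_q > 0 for all l, q). Then the set U^{-∞}(M) has positive Lebesgue measure. -/

import Mathlib

open Matrix MeasureTheory Filter Set

noncomputable section

/-- `U^{-∞}(M)`: points of the open negative orthant all of whose iterates under `M`
tend to `-∞` in every coordinate. -/
def UnegInf {N : ℕ} (M : Matrix (Fin N) (Fin N) ℝ) : Set (Fin N → ℝ) :=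
  {y | (∀ i, y i < 0) ∧ ∀ i, Tendsto (fun k : ℕ => ((M ^ k) *ᵥ y) i) atTop atBot}

/-- `μ ∈ ℂ` is an eigenvalue of the real matrix `M` regarded as a complex matrix. -/
def IsCEigenvalue {N : ℕ} (M : Matrix (Fin N) (Fin N) ℝ) (μ : ℂ) : Prop :=
  ∃ v : Fin N → ℂ, v ≠ 0 ∧ (M.map Complex.ofReal) *ᵥ v = μ • v

/-- `M` is diagonalizable over `ℂ`: `ℂ^N` has a basis of eigenvectors of `M`. -/
def DiagonalizableOverC {N : ℕ} (M : Matrix (Fin N) (Fin N) ℝ) : Prop :=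
  ∃ b : Module.Basis (Fin N) ℂ (Fin N → ℂ), ∀ i, ∃ μ : ℂ,
    (M.map Complex.ofReal) *ᵥ (b i) = μ • (b i)

/-- Casting a real matrix-vector product to ℂ. -/
lemma castVec_mulVec {N : ℕ} (A : Matrix (Fin N) (Fin N) ℝ) (y : Fin N → ℝ) :
    (A.map Complex.ofReal) *ᵥ (fun i => (y i : ℂ)) = fun j => (((A *ᵥ y) j : ℝ) : ℂ) := by
  funext j
  simp [Matrix.mulVec, dotProduct, Matrix.map_apply]

/-- Core of the sufficiency lemma, assuming all components of `w` are negative. -/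
lemma key_neg {N : ℕ} (M : Matrix (Fin N) (Fin N) ℝ)
    (hdiag : DiagonalizableOverC M)
    (lam : ℝ) (hlam : 1 < lam)
    (hdom : ∀ μ : ℂ, IsCEigenvalue M μ → μ ≠ (lam : ℂ) → ‖μ‖ < lam)
    (w : Fin N → ℝ) (hw : M *ᵥ w = lam • w)
    (hneg : ∀ l, w l < 0) :
    0 < volume (UnegInf M) := by
  obtain ⟨b, hb⟩ := hdiag
  choose μ hμ using hb
  set Mc := M.map Complex.ofReal with hMc
  have hlam0 : (0:ℝ) < lam := lt_trans one_pos hlam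
  -- casting of vectors
  set cv : (Fin N → ℝ) → (Fin N → ℂ) := fun y i => (y i : ℂ) with hcv
  have hcast : ∀ (y : Fin N → ℝ) (k : ℕ), (Mc ^ k) *ᵥ cv y = cv ((M ^ k) *ᵥ y) := by
    intro y k
    induction k generalizing y with
    | zero => simp [cv]
    | succ k ih =>
        rw [pow_succ, ← Matrix.mulVec_mulVec]
        have h1 : Mc *ᵥ cv y = cv (M *ᵥ y) := castVec_mulVec M y
        rw [h1, ih (M *ᵥ y), Matrix.mulVec_mulVec, ← pow_succ]
  -- action of powers on the basis
  have hpowb : ∀ (k : ℕ) (i : Fin N), (Mc ^ k) *ᵥ b i = (μ i ^ k) • b i := by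
    intro k i
    induction k with
    | zero => simp
    | succ k ih =>
        rw [pow_succ, ← Matrix.mulVec_mulVec, hμ i, Matrix.mulVec_smul, ih, smul_smul,
          ← pow_succ']
  -- spectral decomposition of powers
  have hdecomp : ∀ (u : Fin N → ℂ) (k : ℕ),
      (Mc ^ k) *ᵥ u = ∑ i, (b.repr u i * μ i ^ k) • b i := by
    intro u k
    conv_lhs => rw [← b.sum_repr u]
    simp only [← Matrix.mulVecLin_apply, map_sum, _root_.map_smul]
    simp only [Matrix.mulVecLin_apply, hpowb, smul_smul]
  -- the eigenvalue set
  set S : Finset (Fin N) := Finset.univ.filter (fun i => μ i = (lam:ℂ)) with hS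
  -- eigenvector equation over ℂ
  have hwC : Mc *ᵥ cv w = ((lam:ℂ)) • cv w := by
    rw [castVec_mulVec M w, hw]
    funext j
    simp [cv, Complex.ofReal_mul]
  -- coordinates of w vanish outside S
  have hrepr_w : ∀ i, i ∉ S → b.repr (cv w) i = 0 := by
    intro i hi
    have hiμ : μ i ≠ (lam:ℂ) := by
      simpa [hS] using hi
    have h1 : Mc *ᵥ cv w = ∑ i, (b.repr (cv w) i * μ i ^ 1) • b i := by
      simpa using hdecomp (cv w) 1
    have h2 : ((lam:ℂ)) • cv w = ∑ i, ((lam:ℂ) * b.repr (cv w) i) • b i := by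
      conv_lhs => rw [← b.sum_repr (cv w)]
      rw [Finset.smul_sum]
      refine Finset.sum_congr rfl fun i _ => ?_
      rw [smul_smul]
    have h3 : (fun i => b.repr (cv w) i * μ i ^ 1) = fun i => (lam:ℂ) * b.repr (cv w) i := by
      rw [← b.repr_sum_self (fun i => b.repr (cv w) i * μ i ^ 1),
        ← b.repr_sum_self (fun i => (lam:ℂ) * b.repr (cv w) i), ← h1, ← h2, hwC]
    have h4 : b.repr (cv w) i * μ i = (lam:ℂ) * b.repr (cv w) i := by
      simpa using congrFun h3 i
    by_contra hne
    apply hiμ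
    field_simp at h4
    rcases mul_eq_mul_left_iff.mp (by linear_combination (b.repr (cv w) i) * h4 : b.repr (cv w) i * μ i = b.repr (cv w) i * (lam:ℂ)) with h | h
    · exact h
    · exact absurd h hne
  -- the dominant-part functions
  set f : Fin N → (Fin N → ℝ) → ℝ := fun j y => ∑ i ∈ S, (b.repr (cv y) i * b i j).re with hf
  have hfw : ∀ j, f j w = w j := by
    intro j
    have : ∑ i ∈ S, b.repr (cv w) i * b i j = ∑ i, b.repr (cv w) i * b i j := by
      refine Finset.sum_subset (Finset.subset_univ S) fun i _ hi => ?_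
      rw [hrepr_w i hi, zero_mul]
    have h2 : ∑ i, b.repr (cv w) i * b i j = (cv w) j := by
      conv_rhs => rw [← b.sum_repr (cv w)]
      simp [Finset.sum_apply]
    rw [hf]
    simp only [← Complex.re_sum, this, h2]
    simp [cv]
  -- continuity of f j
  have hfcont : ∀ j, Continuous (f j) := by
    intro j
    apply continuous_finset_sum
    intro i _
    apply Complex.continuous_re.comp
    have hcvcont : Continuous cv :=
      continuous_pi fun j => Complex.continuous_ofReal.comp (continuous_apply j)
    have hcoord : Continuous fun v : Fin N → ℂ => b.repr v i :=
      (b.coord i).continuous_of_finiteDimensional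
    exact (hcoord.comp hcvcont).mul continuous_const
  -- the open set
  set U : Set (Fin N → ℝ) := {y | (∀ i, y i < 0) ∧ ∀ j, f j y < 0} with hU
  have hUopen : IsOpen U := by
    have h1 : U = (⋂ i, {y : Fin N → ℝ | y i < 0}) ∩ ⋂ j, {y | f j y < 0} := by
      ext y; simp [hU, mem_iInter]
    rw [h1]
    refine IsOpen.inter (isOpen_iInter_of_finite fun i => ?_) (isOpen_iInter_of_finite fun j => ?_)
    · exact isOpen_Iio.preimage (continuous_apply i)
    · exact isOpen_Iio.preimage (hfcont j)
  have hwU : w ∈ U := ⟨hneg, fun j => by rw [hfw]; exact hneg j⟩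
  -- U is contained in UnegInf M
  have hsub : U ⊆ UnegInf M := by
    rintro y ⟨hy1, hy2⟩
    refine ⟨hy1, fun j => ?_⟩
    -- value of the iterates
    have hval : ∀ k : ℕ, ((M ^ k) *ᵥ y) j
        = lam ^ k * f j y + ∑ i ∈ Sᶜ, ((b.repr (cv y) i * μ i ^ k) * b i j).re := by
      intro k
      have h1 : (((M ^ k) *ᵥ y) j : ℂ) = ∑ i, (b.repr (cv y) i * μ i ^ k) * b i j := by
        have := congrFun ((hcast y k).symm.trans (hdecomp (cv y) k)) j
        simpa [cv, Finset.sum_apply] using this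
      have h2 : ((M ^ k) *ᵥ y) j = ∑ i, ((b.repr (cv y) i * μ i ^ k) * b i j).re := by
        rw [← Complex.re_sum, ← h1, Complex.ofReal_re]
      rw [h2, ← Finset.sum_add_sum_compl S]
      congr 1
      rw [Finset.mul_sum]
      refine Finset.sum_congr rfl fun i hi => ?_
      have hiμ : μ i = (lam:ℂ) := by simpa [hS] using hi
      rw [hiμ]
      rw [show b.repr (cv y) i * (lam:ℂ) ^ k * b i j
          = ((lam ^ k : ℝ) : ℂ) * (b.repr (cv y) i * b i j) by push_cast; ring]
      rw [Complex.re_ofReal_mul]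
    -- constants for the remainder
    set c : Fin N → ℝ := fun i => ‖b.repr (cv y) i‖ * ‖b i j‖ with hc
    set r : Fin N → ℝ := fun i => ‖μ i‖ with hr
    have hrlt : ∀ i ∈ Sᶜ, r i < lam := by
      intro i hi
      have hiμ : μ i ≠ (lam:ℂ) := by
        simp only [Finset.mem_compl, hS, Finset.mem_filter, Finset.mem_univ, true_and] at hi
        exact hi
      exact hdom (μ i) ⟨b i, b.ne_zero i, hμ i⟩ hiμ
    have hbound : ∀ k : ℕ, ((M ^ k) *ᵥ y) j ≤ lam ^ k *
        (f j y + ∑ i ∈ Sᶜ, c i * (r i / lam) ^ k) := by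
      intro k
      have hterm : ∀ i ∈ Sᶜ, ((b.repr (cv y) i * μ i ^ k) * b i j).re
          ≤ lam ^ k * (c i * (r i / lam) ^ k) := by
        intro i hi
        calc ((b.repr (cv y) i * μ i ^ k) * b i j).re
            ≤ ‖(b.repr (cv y) i * μ i ^ k) * b i j‖ := Complex.re_le_norm _
          _ = c i * r i ^ k := by
              simp only [norm_mul, norm_pow, hc, hr]; ring
          _ = lam ^ k * (c i * (r i / lam) ^ k) := by
              rw [div_pow]
              field_simp
      calc ((M ^ k) *ᵥ y) j
          = lam ^ k * f j y + ∑ i ∈ Sᶜ, ((b.repr (cv y) i * μ i ^ k) * b i j).re := hval k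
        _ ≤ lam ^ k * f j y + ∑ i ∈ Sᶜ, lam ^ k * (c i * (r i / lam) ^ k) :=
            add_le_add_right (Finset.sum_le_sum hterm) _
        _ = lam ^ k * (f j y + ∑ i ∈ Sᶜ, c i * (r i / lam) ^ k) := by
            rw [mul_add]
            congr 1
            rw [Finset.mul_sum]
    -- the bounding sequence tends to -∞
    have hlim : Tendsto (fun k : ℕ => lam ^ k *
        (f j y + ∑ i ∈ Sᶜ, c i * (r i / lam) ^ k)) atTop atBot := by
      refine Tendsto.atTop_mul_neg (C := f j y) (hy2 j)
        (tendsto_pow_atTop_atTop_of_one_lt hlam) ?_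
      · have hsum : Tendsto (fun k : ℕ => f j y + ∑ i ∈ Sᶜ, c i * (r i / lam) ^ k) atTop
            (nhds (f j y + ∑ i ∈ Sᶜ, c i * 0)) := by
          refine tendsto_const_nhds.add (tendsto_finset_sum _ fun i hi => ?_)
          refine tendsto_const_nhds.mul (tendsto_pow_atTop_nhds_zero_of_lt_one ?_ ?_)
          · positivity
          · rw [div_lt_one hlam0]; exact hrlt i hi
        simpa using hsum
    exact tendsto_atBot_mono hbound hlim
  calc (0:ENNReal) < volume U := hUopen.measure_pos volume ⟨w, hwU⟩
    _ ≤ volume (UnegInf M) := measure_mono hsub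

/-- Sufficiency part of Lemma 3.5: a real, simple, strictly dominant eigenvalue `λ > 1`
with an eigenvector whose components all have the same strict sign forces
`U^{-∞}(M)` to have positive Lebesgue measure. -/
theorem stmt0 {N : ℕ} (hN : 1 ≤ N) (M : Matrix (Fin N) (Fin N) ℝ)
    (hdiag : DiagonalizableOverC M)
    (lam : ℝ) (hlam : 1 < lam)
    (hsimple : Polynomial.rootMultiplicity (lam : ℂ) (M.map Complex.ofReal).charpoly = 1)
    (hdom : ∀ μ : ℂ, IsCEigenvalue M μ → μ ≠ (lam : ℂ) → ‖μ‖ < lam)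
    (w : Fin N → ℝ) (hw : M *ᵥ w = lam • w)
    (hsign : ∀ l q : Fin N, 0 < w l * w q) :
    0 < volume (UnegInf M) := by
  have i0 : Fin N := ⟨0, hN⟩
  have hw0 : w i0 ≠ 0 := by
    have := hsign i0 i0
    intro h; rw [h] at this; simp at this
  rcases lt_or_gt_of_ne hw0 with h0 | h0
  · exact key_neg M hdiag lam hlam hdom w hw (fun l => by nlinarith [hsign l i0])
  · refine key_neg M hdiag lam hlam hdom (-w) ?_ (fun l => ?_)
    · rw [Matrix.mulVec_neg, hw, smul_neg]
    · have h1 := hsign l i0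
      have h2 : 0 < w l := by nlinarith
      exact neg_lt_zero.mpr h2
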